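/- Let W be an N×N doubly stochastic real matrix with strictly positive diagonal entries (W_{ii} > 0 for all i) and let n ∈ ℕ. Then the linear averaging map 𝑾 : X → X defined by (𝑾 x)_i = ∑_j W_{ij} • x_j on X = Fin N → EuclideanSpace ℝ (Fin n) is a paracontraction with respect to the norm ‖·‖_{2,2}: it is continuous, and ‖𝑾 x − y‖_{2,2} < ‖x − y‖_{2,2} for all x, y ∈ X such that x is not a fixed point of 𝑾 and y is a fixed point of 𝑾. -/

import Mathlib

open scoped BigOperators

noncomputable section

open scoped RealInnerProductSpace in
lemma row_identity {E : Type*} [NormedAddCommGroup E] [InnerProductSpace ℝ E]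
    {m : ℕ} (c : Fin m → ℝ) (hc : ∑ j, c j = 1) (v : Fin m → E) :
    ∑ j, ∑ k, c j * c k * ‖v j - v k‖ ^ 2
      = 2 * (∑ j, c j * ‖v j‖ ^ 2) - 2 * ‖∑ j, c j • v j‖ ^ 2 := by
  have hI : ‖∑ j, c j • v j‖ ^ 2 = ∑ j, ∑ k, c j * c k * ⟪v j, v k⟫ := by
    rw [← real_inner_self_eq_norm_sq, sum_inner]
    refine Finset.sum_congr rfl fun j _ => ?_
    rw [real_inner_smul_left, inner_sum, Finset.mul_sum]
    refine Finset.sum_congr rfl fun k _ => ?_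
    rw [real_inner_smul_right]; ring
  have hL : ∀ j k : Fin m, c j * c k * ‖v j - v k‖ ^ 2
      = c j * c k * ‖v j‖ ^ 2 + c j * c k * ‖v k‖ ^ 2 - 2 * (c j * c k * ⟪v j, v k⟫) := by
    intro j k; rw [norm_sub_sq_real]; ring
  simp only [hL, Finset.sum_sub_distrib, Finset.sum_add_distrib, ← Finset.mul_sum, hI]
  have h1 : ∑ j, ∑ k, c j * c k * ‖v j‖ ^ 2 = ∑ j, c j * ‖v j‖ ^ 2 := by
    refine Finset.sum_congr rfl fun j _ => ?_
    have : ∑ k, c j * c k * ‖v j‖ ^ 2 = (c j * ‖v j‖ ^ 2) * ∑ k, c k := by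
      rw [Finset.mul_sum]; exact Finset.sum_congr rfl fun k _ => by ring
    rw [this, hc, mul_one]
  have h2 : ∑ j, ∑ k, c j * c k * ‖v k‖ ^ 2 = ∑ j, c j * ‖v j‖ ^ 2 := by
    rw [Finset.sum_comm]
    refine Finset.sum_congr rfl fun k _ => ?_
    have : ∑ j, c j * c k * ‖v k‖ ^ 2 = (c k * ‖v k‖ ^ 2) * ∑ j, c j := by
      rw [Finset.mul_sum]; exact Finset.sum_congr rfl fun j _ => by ring
    rw [this, hc, mul_one]
  rw [h1, h2]; ring

/-- A matrix is doubly stochastic: nonnegative entries, rows and columns sum to 1. -/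
def DoublyStochastic {N : ℕ} (W : Matrix (Fin N) (Fin N) ℝ) : Prop :=
  (∀ i j, 0 ≤ W i j) ∧ (∀ i, ∑ j, W i j = 1) ∧ (∀ j, ∑ i, W i j = 1)

/-- The averaging map `(𝑾 x)_i = ∑ j, W i j • x j` (Kronecker product `W ⊗ I_n`). -/
def avgMap {N n : ℕ} (W : Matrix (Fin N) (Fin N) ℝ)
    (x : PiLp 2 fun _ : Fin N => EuclideanSpace ℝ (Fin n)) :
    PiLp 2 fun _ : Fin N => EuclideanSpace ℝ (Fin n) :=
  WithLp.toLp 2 fun i => ∑ j, W i j • x j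

lemma avgMap_contract {N n : ℕ} (W : Matrix (Fin N) (Fin N) ℝ) (hW : DoublyStochastic W)
    (hdiag : ∀ i, 0 < W i i)
    (z : PiLp 2 fun _ : Fin N => EuclideanSpace ℝ (Fin n))
    (hz : avgMap W z ≠ z) : ‖avgMap W z‖ < ‖z‖ := by
  obtain ⟨hpos, hrow, hcol⟩ := hW
  have hsq : ‖avgMap W z‖ ^ 2 < ‖z‖ ^ 2 := by
    rw [PiLp.norm_sq_eq_of_L2, PiLp.norm_sq_eq_of_L2]
    have hz_col : ∑ i, ‖z i‖ ^ 2 = ∑ i, ∑ j, W i j * ‖z j‖ ^ 2 := by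
      calc ∑ i, ‖z i‖ ^ 2 = ∑ j, (∑ i, W i j) * ‖z j‖ ^ 2 := by simp [hcol]
        _ = ∑ j, ∑ i, W i j * ‖z j‖ ^ 2 := by simp [Finset.sum_mul]
        _ = ∑ i, ∑ j, W i j * ‖z j‖ ^ 2 := Finset.sum_comm
    rw [hz_col]
    -- nonneg of the slack double sum
    have hDnn : ∀ i, (0:ℝ) ≤ ∑ j, ∑ k, W i j * W i k * ‖z j - z k‖ ^ 2 := fun i =>
      Finset.sum_nonneg fun j _ => Finset.sum_nonneg fun k _ =>
        mul_nonneg (mul_nonneg (hpos i j) (hpos i k)) (sq_nonneg _)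
    have hle : ∀ i, ‖avgMap W z i‖ ^ 2 ≤ ∑ j, W i j * ‖z j‖ ^ 2 := by
      intro i
      have := row_identity (W i) (hrow i) z
      have hD := hDnn i
      show ‖∑ j, W i j • z j‖ ^ 2 ≤ _
      linarith
    obtain ⟨i0, hi0⟩ : ∃ i, avgMap W z i ≠ z i := by
      by_contra h
      push_neg at h
      exact hz (PiLp.ext h)
    have hj : ∃ j, 0 < W i0 j ∧ z j ≠ z i0 := by
      by_contra h
      push_neg at h
      apply hi0
      have : ∀ j, W i0 j • z j = W i0 j • z i0 := by
        intro j
        rcases (hpos i0 j).eq_or_lt with he | hl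
        · rw [← he, zero_smul, zero_smul]
        · rw [h j hl]
      calc avgMap W z i0 = ∑ j, W i0 j • z j := rfl
        _ = ∑ j, W i0 j • z i0 := Finset.sum_congr rfl fun j _ => this j
        _ = (∑ j, W i0 j) • z i0 := (Finset.sum_smul).symm
        _ = z i0 := by rw [hrow i0, one_smul]
    obtain ⟨j0, hj0pos, hj0ne⟩ := hj
    have hDpos : (0:ℝ) < ∑ j, ∑ k, W i0 j * W i0 k * ‖z j - z k‖ ^ 2 := by
      refine Finset.sum_pos' (fun j _ => Finset.sum_nonneg fun k _ =>
        mul_nonneg (mul_nonneg (hpos i0 j) (hpos i0 k)) (sq_nonneg _)) ⟨j0, Finset.mem_univ _, ?_⟩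
      refine Finset.sum_pos' (fun k _ =>
        mul_nonneg (mul_nonneg (hpos i0 j0) (hpos i0 k)) (sq_nonneg _)) ⟨i0, Finset.mem_univ _, ?_⟩
      have : (0:ℝ) < ‖z j0 - z i0‖ ^ 2 := by
        exact pow_pos (norm_pos_iff.mpr (sub_ne_zero_of_ne hj0ne)) 2
      exact mul_pos (mul_pos hj0pos (hdiag i0)) this
    have hlt : ‖avgMap W z i0‖ ^ 2 < ∑ j, W i0 j * ‖z j‖ ^ 2 := by
      have := row_identity (W i0) (hrow i0) z
      show ‖∑ j, W i0 j • z j‖ ^ 2 < _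
      linarith
    exact Finset.sum_lt_sum (fun i _ => hle i) ⟨i0, Finset.mem_univ _, hlt⟩
  exact lt_of_pow_lt_pow_left₀ 2 (norm_nonneg z) hsq

/-- Lemma 2, second part: the averaging map of a doubly stochastic matrix with
strictly positive diagonal is a paracontraction w.r.t. the mixed norm `‖·‖_{2,2}`. -/
theorem doubly_stochastic_avgMap_paracontraction
    (N n : ℕ) (W : Matrix (Fin N) (Fin N) ℝ) (hW : DoublyStochastic W)
    (hdiag : ∀ i, 0 < W i i) :
    Continuous (avgMap W : (PiLp 2 fun _ : Fin N => EuclideanSpace ℝ (Fin n)) →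
        (PiLp 2 fun _ : Fin N => EuclideanSpace ℝ (Fin n))) ∧
    ∀ x y : PiLp 2 fun _ : Fin N => EuclideanSpace ℝ (Fin n),
      avgMap W x ≠ x → avgMap W y = y → ‖avgMap W x - y‖ < ‖x - y‖ := by
  constructor
  · let L : (PiLp 2 fun _ : Fin N => EuclideanSpace ℝ (Fin n)) →ₗ[ℝ]
        (PiLp 2 fun _ : Fin N => EuclideanSpace ℝ (Fin n)) :=
      { toFun := avgMap W
        map_add' := fun x y => PiLp.ext fun i => by
          simp [avgMap, smul_add, Finset.sum_add_distrib]
        map_smul' := fun c x => PiLp.ext fun i => by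
          simp [avgMap, Finset.smul_sum, smul_comm c] }
    have : ContinuousSMul ℝ (PiLp 2 fun _ : Fin N => EuclideanSpace ℝ (Fin n)) := inferInstance
    have : IsTopologicalAddGroup (PiLp 2 fun _ : Fin N => EuclideanSpace ℝ (Fin n)) := inferInstance
    have : FiniteDimensional ℝ (PiLp 2 fun _ : Fin N => EuclideanSpace ℝ (Fin n)) := inferInstance
    have : T2Space (PiLp 2 fun _ : Fin N => EuclideanSpace ℝ (Fin n)) := inferInstance
    exact L.continuous_of_finiteDimensional
  · intro x y hx hy
    have hlin : avgMap W (x - y) = avgMap W x - avgMap W y := PiLp.ext fun i => by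
      simp [avgMap, smul_sub, Finset.sum_sub_distrib]
    have hne : avgMap W (x - y) ≠ x - y := by
      rw [hlin, hy]
      intro h
      exact hx (sub_left_injective h)
    have := avgMap_contract W hW hdiag (x - y) hne
    rwa [hlin, hy] at this
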